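/- If an m-linear form U on (ℝⁿ)^m is composed of exactly k nonzero monomials and achieves (∑_{j₁,…,j_{m−1}}(∑_{j_m}|U(e_{j₁},…,e_{j_m})|)²)^{1/2} = (√2)^{m−1}‖U‖ with U ≠ 0, then k ≥ 2^{m−1}. -/

import Mathlib

/-- Standard basis vector of `ℓ∞ⁿ`. -/
noncomputable def stdBasis (n : ℕ) (i : Fin n) : PiLp ⊤ (fun _ : Fin n => ℝ) :=
  (WithLp.equiv ⊤ (∀ _ : Fin n, ℝ)).symm (Pi.single i 1)

noncomputable def sgn (b : Bool) : ℝ := if b then 1 else -1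
noncomputable def sv (n : ℕ) (e : Fin n → Bool) : PiLp ⊤ (fun _ : Fin n => ℝ) :=
  (WithLp.equiv ⊤ (∀ _ : Fin n, ℝ)).symm (fun i => sgn (e i))
lemma sv_norm (n : ℕ) (e : Fin n → Bool) : ‖sv n e‖ ≤ 1 := by
  rw [PiLp.norm_eq_ciSup]
  apply Real.iSup_le _ zero_le_one
  intro i
  simp [sv, sgn, Real.norm_eq_abs]
  split <;> norm_num

lemma sv_eq_sum (n : ℕ) (e : Fin n → Bool) :
    sv n e = ∑ i, sgn (e i) • stdBasis n i := by
  ext t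
  rw [WithLp.ofLp_sum, Finset.sum_apply]
  simp only [sv, stdBasis, WithLp.equiv_symm_apply, PiLp.toLp_apply, PiLp.smul_apply, smul_eq_mul]
  rw [Finset.sum_eq_single t] <;> simp +contextual [Pi.single_apply, eq_comm]

lemma expand (m n : ℕ)
    (U : ContinuousMultilinearMap ℝ (fun _ : Fin (m + 1) => PiLp ⊤ fun _ : Fin n => ℝ) ℝ)
    (ε : Fin (m + 1) → Fin n → Bool) :
    U (fun s => sv n (ε s)) =
      ∑ j : Fin (m + 1) → Fin n, (∏ s, sgn (ε s (j s))) * U (fun s => stdBasis n (j s)) := by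
  have h : (fun s => sv n (ε s)) = fun s => ∑ i : Fin n, sgn (ε s i) • stdBasis n i := by
    funext s; exact sv_eq_sum n (ε s)
  rw [h]
  rw [U.map_sum]
  refine Finset.sum_congr rfl fun j _ => ?_
  rw [U.map_smul_univ]
  rfl

lemma sum_sgn : ∑ b : Bool, sgn b = 0 := by simp [sgn]

lemma orth1 (n : ℕ) (a b : Fin n) :
    ∑ e : Fin n → Bool, sgn (e a) * sgn (e b) = if a = b then (2 : ℝ) ^ n else 0 := by
  have key : ∀ e : Fin n → Bool, sgn (e a) * sgn (e b) =
      ∏ i, ((if a = i then sgn (e i) else 1) * (if b = i then sgn (e i) else 1)) := by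
    intro e
    rw [Finset.prod_mul_distrib, Finset.prod_ite_eq, Finset.prod_ite_eq]
    simp
  simp only [key]
  rw [← Fintype.prod_sum (fun i bo => (if a = i then sgn bo else 1) * (if b = i then sgn bo else 1))]
  by_cases hab : a = b
  · subst hab
    rw [if_pos rfl]
    have : ∀ i : Fin n, (∑ bo : Bool, (if a = i then sgn bo else 1) * (if a = i then sgn bo else 1)) = 2 := by
      intro i
      by_cases h : a = i <;> simp [h, sgn] <;> norm_num
    simp only [this, Finset.prod_const, Finset.card_univ, Fintype.card_fin]
  · rw [if_neg hab]
    apply Finset.prod_eq_zero (Finset.mem_univ a)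
    simp [Ne.symm hab, sgn]

lemma orth (m n : ℕ) (j j' : Fin (m + 1) → Fin n) :
    ∑ ε : Fin (m + 1) → Fin n → Bool, ∏ s, sgn (ε s (j s)) * sgn (ε s (j' s))
      = if j = j' then ((2 : ℝ) ^ n) ^ (m + 1) else 0 := by
  rw [← Fintype.prod_sum (fun s (e : Fin n → Bool) => sgn (e (j s)) * sgn (e (j' s)))]
  simp only [orth1]
  by_cases h : j = j'
  · subst h; simp
  · obtain ⟨s, hs⟩ : ∃ s, j s ≠ j' s := by
      by_contra hc; push_neg at hc; exact h (funext hc)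
    rw [if_neg h]
    exact Finset.prod_eq_zero (Finset.mem_univ s) (by rw [if_neg hs])

lemma l2 (m n : ℕ)
    (U : ContinuousMultilinearMap ℝ (fun _ : Fin (m + 1) => PiLp ⊤ fun _ : Fin n => ℝ) ℝ) :
    ∑ j : Fin (m + 1) → Fin n, (U (fun s => stdBasis n (j s))) ^ 2 ≤ ‖U‖ ^ 2 := by
  set a : (Fin (m + 1) → Fin n) → ℝ := fun j => U (fun s => stdBasis n (j s)) with ha
  set C : ℝ := ((2 : ℝ) ^ n) ^ (m + 1) with hC
  have hCpos : 0 < C := by positivity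
  set P : (Fin (m + 1) → Fin n → Bool) → (Fin (m + 1) → Fin n) → ℝ :=
    fun ε j => ∏ s, sgn (ε s (j s)) with hP
  have h2 : ∑ ε : Fin (m + 1) → Fin n → Bool, (U (fun s => sv n (ε s))) ^ 2
      = C * ∑ j, a j ^ 2 := by
    have e1 : ∀ ε : Fin (m + 1) → Fin n → Bool, (U (fun s => sv n (ε s))) ^ 2
        = ∑ j : Fin (m + 1) → Fin n, ∑ j' : Fin (m + 1) → Fin n,
            (∏ s, sgn (ε s (j s)) * sgn (ε s (j' s))) * (a j * a j') := by
      intro ε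
      rw [expand, sq, Finset.sum_mul_sum]
      refine Finset.sum_congr rfl fun j _ => Finset.sum_congr rfl fun j' _ => ?_
      rw [Finset.prod_mul_distrib]; ring
    simp only [e1]
    rw [Finset.sum_comm]
    have e2 : ∀ j : Fin (m + 1) → Fin n,
        (∑ ε : Fin (m + 1) → Fin n → Bool, ∑ j' : Fin (m + 1) → Fin n,
          (∏ s, sgn (ε s (j s)) * sgn (ε s (j' s))) * (a j * a j')) = C * a j ^ 2 := by
      intro j
      rw [Finset.sum_comm]
      have e3 : ∀ j' : Fin (m + 1) → Fin n,
          (∑ ε : Fin (m + 1) → Fin n → Bool,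
            (∏ s, sgn (ε s (j s)) * sgn (ε s (j' s))) * (a j * a j'))
          = (if j = j' then C else 0) * (a j * a j') := by
        intro j'
        rw [← Finset.sum_mul, orth]
      simp only [e3, ite_mul, zero_mul]
      rw [Finset.sum_ite_eq Finset.univ j (fun j' => C * (a j * a j'))]
      simp [sq]
    simp only [e2]
    rw [← Finset.mul_sum]
  have h1 : ∑ ε : Fin (m + 1) → Fin n → Bool, (U (fun s => sv n (ε s))) ^ 2 ≤ C * ‖U‖ ^ 2 := by
    have hb : ∀ ε : Fin (m + 1) → Fin n → Bool, (U (fun s => sv n (ε s))) ^ 2 ≤ ‖U‖ ^ 2 := by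
      intro ε
      have h0 : |U (fun s => sv n (ε s))| ≤ ‖U‖ := by
        have := U.le_opNorm (fun s => sv n (ε s))
        rw [Real.norm_eq_abs] at this
        refine this.trans ?_
        have : ∏ s : Fin (m + 1), ‖sv n (ε s)‖ ≤ 1 :=
          Finset.prod_le_one (fun s _ => norm_nonneg _) (fun s _ => sv_norm n (ε s))
        calc ‖U‖ * ∏ s : Fin (m + 1), ‖sv n (ε s)‖ ≤ ‖U‖ * 1 :=
              mul_le_mul_of_nonneg_left this (norm_nonneg U)
          _ = ‖U‖ := mul_one _
      calc (U (fun s => sv n (ε s))) ^ 2 = |U (fun s => sv n (ε s))| ^ 2 := (sq_abs _).symm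
        _ ≤ ‖U‖ ^ 2 := pow_le_pow_left₀ (abs_nonneg _) h0 2
    calc ∑ ε : Fin (m + 1) → Fin n → Bool, (U (fun s => sv n (ε s))) ^ 2
        ≤ ∑ _ε : Fin (m + 1) → Fin n → Bool, ‖U‖ ^ 2 := Finset.sum_le_sum fun ε _ => hb ε
      _ = C * ‖U‖ ^ 2 := by
          rw [Finset.sum_const, Finset.card_univ]
          simp [hC, Fintype.card_fun, mul_comm]
  rw [h2] at h1
  exact le_of_mul_le_mul_left h1 hCpos

/-- If a nonzero `(m+1)`-linear form `U` on `(ℝⁿ)^{m+1}` (sup norms) has exactly `k`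
nonzero monomial coefficients and attains the sharp constant `(√2)^m` in the mixed
`(ℓ₁,ℓ₂)`-Littlewood inequality with exponent `(2,…,2,1)`, then `k ≥ 2^m`. -/
theorem stmt10 (m n k : ℕ)
    (U : ContinuousMultilinearMap ℝ (fun _ : Fin (m + 1) => PiLp ⊤ fun _ : Fin n => ℝ) ℝ)
    (hU : U ≠ 0)
    (hk : (Finset.univ.filter
        (fun j : Fin (m + 1) → Fin n => U (fun s => stdBasis n (j s)) ≠ 0)).card = k)
    (hext : (∑ jr : Fin m → Fin n,
        (∑ jl : Fin n,
          |U (Fin.snoc (fun s => stdBasis n (jr s)) (stdBasis n jl))|) ^ 2) ^ ((1 : ℝ) / 2)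
      = Real.sqrt 2 ^ m * ‖U‖) :
    2 ^ m ≤ k := by
  classical
  set a : (Fin (m + 1) → Fin n) → ℝ := fun j => U (fun s => stdBasis n (j s)) with ha
  have hsnoc : ∀ (jr : Fin m → Fin n) (jl : Fin n),
      U (Fin.snoc (fun s => stdBasis n (jr s)) (stdBasis n jl)) = a (Fin.snoc jr jl) := by
    intro jr jl
    simp only [ha]
    congr 1
    exact (Fin.comp_snoc (fun i => stdBasis n i) jr jl).symm
  set S : ℝ := ∑ jr : Fin m → Fin n, (∑ jl : Fin n, |a (Fin.snoc jr jl)|) ^ 2 with hSdef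
  have hS_nonneg : (0 : ℝ) ≤ S := Finset.sum_nonneg fun _ _ => sq_nonneg _
  -- step 1 : S = 2^m * ‖U‖^2
  have hSval : S = 2 ^ m * ‖U‖ ^ 2 := by
    have h1 : (S ^ ((1 : ℝ) / 2)) = Real.sqrt 2 ^ m * ‖U‖ := by
      rw [hSdef]
      simp only [hsnoc] at hext
      exact hext
    have h2 : (S ^ ((1 : ℝ) / 2)) ^ (2 : ℕ) = S := by
      rw [← Real.rpow_natCast (S ^ ((1 : ℝ) / 2)) 2, ← Real.rpow_mul hS_nonneg]
      norm_num
    rw [← h2, h1, mul_pow, ← pow_mul, mul_comm m 2, pow_mul, Real.sq_sqrt (by norm_num : (0:ℝ) ≤ 2)]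
  -- step 2 : Cauchy-Schwarz
  have hCS : ∀ jr : Fin m → Fin n,
      (∑ jl : Fin n, |a (Fin.snoc jr jl)|) ^ 2 ≤ (k : ℝ) * ∑ jl : Fin n, a (Fin.snoc jr jl) ^ 2 := by
    intro jr
    set f : Fin n → ℝ := fun jl => if a (Fin.snoc jr jl) ≠ 0 then 1 else 0 with hf
    have hfg : ∀ jl, |a (Fin.snoc jr jl)| = f jl * |a (Fin.snoc jr jl)| := by
      intro jl
      by_cases h : a (Fin.snoc jr jl) = 0 <;> simp [hf, h]
    have cs := Finset.sum_mul_sq_le_sq_mul_sq Finset.univ f (fun jl => |a (Fin.snoc jr jl)|)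
    simp only [← hfg] at cs
    refine cs.trans ?_
    have habs : ∑ i : Fin n, |a (Fin.snoc jr i)| ^ 2 = ∑ jl : Fin n, a (Fin.snoc jr jl) ^ 2 := by
      simp only [sq_abs]
    rw [habs]
    refine mul_le_mul_of_nonneg_right ?_ (Finset.sum_nonneg fun _ _ => sq_nonneg _)
    · -- ∑ f^2 ≤ k
      have hsum : ∑ jl : Fin n, f jl ^ 2
          = ((Finset.univ.filter (fun jl : Fin n => a (Fin.snoc jr jl) ≠ 0)).card : ℝ) := by
        rw [Finset.card_filter]
        push_cast
        refine Finset.sum_congr rfl fun jl _ => ?_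
        by_cases h : a (Fin.snoc jr jl) = 0 <;> simp [hf, h]
      rw [hsum]
      have hcard : (Finset.univ.filter (fun jl : Fin n => a (Fin.snoc jr jl) ≠ 0)).card
          ≤ (Finset.univ.filter (fun j : Fin (m + 1) → Fin n => a j ≠ 0)).card := by
        apply Finset.card_le_card_of_injOn (fun jl : Fin n => (Fin.snoc jr jl : Fin (m+1) → Fin n))
        · intro jl hjl
          simp only [Finset.coe_filter, Finset.mem_filter, Finset.mem_univ, true_and, Set.mem_setOf_eq] at hjl ⊢
          exact hjl
        · intro x _ y _ hxy
          have := congrArg (fun g => g (Fin.last m)) hxy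
          simpa using this
      exact_mod_cast hcard.trans_eq hk
  -- step 3 : sum over jr
  have hsum2 : ∑ jr : Fin m → Fin n, ∑ jl : Fin n, a (Fin.snoc jr jl) ^ 2
      = ∑ j : Fin (m + 1) → Fin n, a j ^ 2 := by
    rw [← Fintype.sum_prod_type']
    exact Fintype.sum_equiv ((Fin.snocEquiv (fun _ => Fin n)).symm.trans (Equiv.prodComm _ _)).symm
      _ _ (fun p => by simp [Fin.snocEquiv])
  have hSk : S ≤ (k : ℝ) * ‖U‖ ^ 2 := by
    calc S ≤ ∑ jr : Fin m → Fin n, (k : ℝ) * ∑ jl : Fin n, a (Fin.snoc jr jl) ^ 2 :=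
          Finset.sum_le_sum fun jr _ => hCS jr
      _ = (k : ℝ) * ∑ j : Fin (m + 1) → Fin n, a j ^ 2 := by
          rw [← Finset.mul_sum, hsum2]
      _ ≤ (k : ℝ) * ‖U‖ ^ 2 :=
          mul_le_mul_of_nonneg_left (l2 m n U) (Nat.cast_nonneg k)
  -- conclude
  have hUpos : (0 : ℝ) < ‖U‖ ^ 2 := by
    have : 0 < ‖U‖ := norm_pos_iff.mpr hU
    positivity
  rw [hSval] at hSk
  have : (2 : ℝ) ^ m ≤ (k : ℝ) := le_of_mul_le_mul_right (by linarith) hUpos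
  exact_mod_cast this
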